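/- Let G = (V,E) be a finite digraph, 𝒟 and 𝒯 disjoint node sets, and let ℬ ⊆ V ∖ 𝒟 be a set of minimal cardinality such that every directed path from 𝒟 to 𝒯 intersects ℬ. Let Z*(ℬ) be the maximal controlled invariant (w.r.t. ℬ) subset of V ∖ 𝒯. Then ℬ equals the out-boundary of Z*(ℬ): ℬ = ∂₊(Z*(ℬ)) = {v_j ∉ Z*(ℬ) : ∃ (v_i,v_j) ∈ E, v_i ∈ Z*(ℬ)}; in particular ℬ ∩ Z*(ℬ) = ∅ and every node of ℬ lies on some 𝒟-to-𝒯 path. -/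

import Mathlib

variable {V : Type*} [Fintype V]

/-- A directed path in the digraph `E`. -/
def IsPath (E : V → V → Prop) {k : ℕ} (p : Fin (k + 1) → V) : Prop :=
  Function.Injective p ∧ ∀ i : Fin k, E (p i.castSucc) (p i.succ)

/-- `B` blocks all `𝒟`-to-`𝒯` directed paths. -/
def BlocksPaths (E : V → V → Prop) (D T B : Set V) : Prop :=
  ∀ (k : ℕ) (p : Fin (k + 1) → V), IsPath E p →
    p 0 ∈ D → p (Fin.last k) ∈ T → ∃ s, p s ∈ B

/-- Auxiliary: `v` can reach `T` by a path all of whose nodes except possibly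
the first avoid `B`. -/
def Reach (E : V → V → Prop) (T B : Set V) (v : V) : Prop :=
  ∃ (k : ℕ) (p : Fin (k + 1) → V), IsPath E p ∧ p 0 = v ∧ p (Fin.last k) ∈ T ∧
    ∀ s : Fin (k + 1), s ≠ 0 → p s ∉ B

lemma reach_of_mem_T {E : V → V → Prop} {T B : Set V} {v : V} (hv : v ∈ T) :
    Reach E T B v := by
  refine ⟨0, fun _ => v, ⟨?_, fun i => i.elim0⟩, rfl, hv, ?_⟩
  · intro a b _
    have ha := a.isLt
    have hb := b.isLt
    exact Fin.ext (by omega)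
  · intro s hs
    have hs' := s.isLt
    exact absurd (Fin.ext (by omega)) hs

lemma reach_of_edge {E : V → V → Prop} {T B : Set V} {v j : V}
    (hE : E v j) (hjB : j ∉ B) (hj : Reach E T B j) : Reach E T B v := by
  obtain ⟨k, p, ⟨hinj, hedge⟩, hp0, hlast, havoid⟩ := hj
  by_cases hv : ∃ t : Fin (k + 1), p t = v
  · -- take the suffix of `p` starting at `v`
    obtain ⟨t, ht⟩ := hv
    have htk : (t : ℕ) ≤ k := Nat.lt_succ_iff.mp t.isLt
    set m : ℕ := k - (t : ℕ) with hm
    have hb : ∀ i : Fin (m + 1), (t : ℕ) + (i : ℕ) < k + 1 := by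
      intro i
      have := i.isLt
      omega
    refine ⟨m, fun i => p ⟨(t : ℕ) + (i : ℕ), hb i⟩, ⟨?_, ?_⟩, ?_, ?_, ?_⟩
    · intro a b hab
      have h2 := hinj hab
      have h3 : (t : ℕ) + (a : ℕ) = (t : ℕ) + (b : ℕ) := by
        simpa [Fin.ext_iff] using h2
      exact Fin.ext (by omega)
    · intro i
      have hik : (t : ℕ) + (i : ℕ) < k := by
        have := i.isLt
        omega
      convert hedge ⟨(t : ℕ) + (i : ℕ), hik⟩ using 2
      all_goals exact Fin.ext (by simp [Nat.add_assoc])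
    · show p ⟨(t : ℕ) + ((0 : Fin (m+1)) : ℕ), hb 0⟩ = v
      have e0 : (⟨(t : ℕ) + ((0 : Fin (m+1)) : ℕ), hb 0⟩ : Fin (k+1)) = t := by
        apply Fin.ext
        simp
      rw [e0]
      exact ht
    · show p ⟨(t : ℕ) + ((Fin.last m : Fin (m+1)) : ℕ), hb (Fin.last m)⟩ ∈ T
      have el : (⟨(t : ℕ) + ((Fin.last m : Fin (m+1)) : ℕ), hb (Fin.last m)⟩ : Fin (k+1))
          = Fin.last k := by
        apply Fin.ext
        simp [Fin.last]
        omega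
      rw [el]
      exact hlast
    · intro s hs
      have hsv : (s : ℕ) ≠ 0 := by
        intro h
        exact hs (Fin.ext (by simp [h]))
      apply havoid
      intro h
      have : (t : ℕ) + (s : ℕ) = 0 := by
        have h' := congrArg Fin.val h
        rw [Fin.val_zero] at h'
        exact h'
      omega
  · -- prepend `v` to `p`
    push_neg at hv
    have hb : ∀ i : Fin (k + 2), (i : ℕ) ≠ 0 → (i : ℕ) - 1 < k + 1 := by
      intro i h
      have := i.isLt
      omega
    refine ⟨k + 1, fun i => if h : (i : ℕ) = 0 then v else p ⟨(i : ℕ) - 1, hb i h⟩,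
      ⟨?_, ?_⟩, ?_, ?_, ?_⟩
    · intro a b hab
      by_cases ha : (a : ℕ) = 0 <;> by_cases hbb : (b : ℕ) = 0
      · exact Fin.ext (by omega)
      · simp only [ha, hbb, dif_pos, dif_neg, not_false_iff] at hab
        exact absurd hab.symm (hv _)
      · simp only [ha, hbb, dif_pos, dif_neg, not_false_iff] at hab
        exact absurd hab (hv _)
      · simp only [ha, hbb, dif_neg, not_false_iff] at hab
        have h2 := hinj hab
        have h3 : (a : ℕ) - 1 = (b : ℕ) - 1 := by simpa [Fin.ext_iff] using h2
        exact Fin.ext (by omega)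
    · intro i
      by_cases hi : (i : ℕ) = 0
      · have hc : ((i.castSucc : Fin (k+2)) : ℕ) = 0 := by simpa using hi
        have hsnz : ((i.succ : Fin (k+2)) : ℕ) ≠ 0 := by simp
        simp only [hc, hsnz, dif_pos, dif_neg, not_false_iff]
        have e0 : (⟨((i.succ : Fin (k+2)) : ℕ) - 1, hb i.succ hsnz⟩ : Fin (k+1)) = 0 := by
          apply Fin.ext
          simp [hi]
        rw [e0, hp0]
        exact hE
      · have hc : ((i.castSucc : Fin (k+2)) : ℕ) ≠ 0 := by simpa using hi
        have hsnz : ((i.succ : Fin (k+2)) : ℕ) ≠ 0 := by simp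
        simp only [hc, hsnz, dif_neg, not_false_iff]
        have hik : (i : ℕ) - 1 < k := by
          have := i.isLt
          omega
        have := hedge ⟨(i : ℕ) - 1, hik⟩
        have e1 : (⟨((i.castSucc : Fin (k+2)) : ℕ) - 1, hb i.castSucc hc⟩ : Fin (k+1))
            = Fin.castSucc ⟨(i : ℕ) - 1, hik⟩ := by
          apply Fin.ext
          simp
        have e2 : (⟨((i.succ : Fin (k+2)) : ℕ) - 1, hb i.succ hsnz⟩ : Fin (k+1))
            = Fin.succ ⟨(i : ℕ) - 1, hik⟩ := by
          apply Fin.ext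
          simp
          omega
        rw [e1, e2]
        exact this
    · simp
    · have hlnz : ((Fin.last (k+1) : Fin (k+2)) : ℕ) ≠ 0 := by simp
      simp only [hlnz, dif_neg, not_false_iff]
      have el : (⟨((Fin.last (k+1) : Fin (k+2)) : ℕ) - 1, hb _ hlnz⟩ : Fin (k+1))
          = Fin.last k := by
        apply Fin.ext
        simp [Fin.last]
      rw [el]
      exact hlast
    · intro s hs
      have hsv : (s : ℕ) ≠ 0 := by
        intro h
        exact hs (Fin.ext (by simp [h]))
      simp only [hsv, dif_neg, not_false_iff]
      by_cases h1 : (s : ℕ) - 1 = 0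
      · have e0 : (⟨(s : ℕ) - 1, hb s hsv⟩ : Fin (k+1)) = 0 := by
          apply Fin.ext
          simp [h1]
        rw [e0, hp0]
        exact hjB
      · apply havoid
        intro h
        have : (s : ℕ) - 1 = 0 := by simpa [Fin.ext_iff] using h
        exact h1 this

/-- If a path starts in `Zstar` and ends outside, some node on it is in the
out-boundary of `Zstar`. -/
lemma exists_boundary {E : V → V → Prop} {Zstar : Set V} {k : ℕ} {p : Fin (k + 1) → V}
    (hp : IsPath E p) (h0 : p 0 ∈ Zstar) (hl : p (Fin.last k) ∉ Zstar) :
    ∃ s : Fin (k + 1), p s ∉ Zstar ∧ ∃ i ∈ Zstar, E i (p s) := by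
  classical
  obtain ⟨hinj, hedge⟩ := hp
  have hex : ∃ n : ℕ, ∃ h : n < k + 1, p ⟨n, h⟩ ∉ Zstar := by
    refine ⟨k, Nat.lt_succ_self k, ?_⟩
    simpa [Fin.last] using hl
  set m := Nat.find hex with hmdef
  obtain ⟨hmlt, hmnot⟩ := Nat.find_spec hex
  have hm0 : m ≠ 0 := by
    intro h
    apply hmnot
    have : (⟨m, hmlt⟩ : Fin (k+1)) = 0 := Fin.ext (by simp [h])
    rw [this]
    exact h0
  have hprev : p ⟨m - 1, by omega⟩ ∈ Zstar := by
    by_contra hc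
    have := Nat.find_min hex (m := m - 1) (by omega)
    exact this ⟨by omega, hc⟩
  have hmk : m - 1 < k := by omega
  have := hedge ⟨m - 1, hmk⟩
  have e1 : (Fin.castSucc ⟨m - 1, hmk⟩ : Fin (k+1)) = ⟨m - 1, by omega⟩ := Fin.ext rfl
  have e2 : (Fin.succ ⟨m - 1, hmk⟩ : Fin (k+1)) = ⟨m, hmlt⟩ := Fin.ext (by simp; omega)
  rw [e1, e2] at this
  exact ⟨⟨m, hmlt⟩, hmnot, p ⟨m - 1, by omega⟩, hprev, this⟩

/-- If `ℬ ⊆ V ∖ 𝒟` is a minimum cardinality node set blocking all `𝒟`-to-`𝒯`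
paths, then `ℬ` equals the out-boundary of the maximal controlled invariant subset
`Z*(ℬ)` of `V ∖ 𝒯`; in particular `ℬ ∩ Z*(ℬ) = ∅` and every node of `ℬ` lies on
some `𝒟`-to-`𝒯` path. -/
theorem minimal_input_cut_eq_out_boundary (E : V → V → Prop) (D T B Zstar : Set V)
    (hDT : D ∩ T = ∅) (hBD : B ⊆ Dᶜ)
    (hblock : BlocksPaths E D T B)
    (hmin : ∀ B' : Set V, B' ⊆ Dᶜ → BlocksPaths E D T B' → B.ncard ≤ B'.ncard)
    -- `Z*(ℬ)` is the maximal controlled invariant (w.r.t. `ℬ`) subset of `V ∖ 𝒯`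
    (hZsub : Zstar ⊆ Tᶜ)
    (hZinv : ∀ i ∈ Zstar, ∀ j, E i j → j ∈ Zstar ∪ B)
    (hZmax : ∀ W : Set V, W ⊆ Tᶜ → (∀ i ∈ W, ∀ j, E i j → j ∈ W ∪ B) → W ⊆ Zstar) :
    B = {j | j ∉ Zstar ∧ ∃ i ∈ Zstar, E i j} ∧
    B ∩ Zstar = ∅ ∧
    (∀ b ∈ B, ∃ (k : ℕ) (p : Fin (k + 1) → V), IsPath E p ∧
      p 0 ∈ D ∧ p (Fin.last k) ∈ T ∧ ∃ s, p s = b) := by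
  classical
  -- Step 1: D ⊆ Zstar
  have hDZ : D ⊆ Zstar := by
    have hW : {v : V | ¬ Reach E T B v} ⊆ Zstar := by
      apply hZmax
      · intro v hv hvT
        exact hv (reach_of_mem_T hvT)
      · intro i hi j hij
        by_cases hjB : j ∈ B
        · exact Or.inr hjB
        · refine Or.inl ?_
          intro hj
          exact hi (reach_of_edge hij hjB hj)
    intro v hvD
    apply hW
    intro hR
    obtain ⟨k, p, hp, hp0, hlast, havoid⟩ := hR
    obtain ⟨s, hs⟩ := hblock k p hp (hp0 ▸ hvD) hlast
    by_cases h : s = 0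
    · rw [h, hp0] at hs
      exact hBD hs hvD
    · exact havoid s h hs
  -- out-boundary
  set Bd : Set V := {j | j ∉ Zstar ∧ ∃ i ∈ Zstar, E i j} with hBddef
  have hBdB : Bd ⊆ B := by
    rintro j ⟨hjZ, i, hiZ, hij⟩
    rcases hZinv i hiZ j hij with h | h
    · exact absurd h hjZ
    · exact h
  have hBdblock : BlocksPaths E D T Bd := by
    intro k p hp hp0 hlast
    have h0 : p 0 ∈ Zstar := hDZ hp0
    have hl : p (Fin.last k) ∉ Zstar := fun h => hZsub h hlast
    obtain ⟨s, h1, h2⟩ := exists_boundary hp h0 hl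
    exact ⟨s, h1, h2⟩
  have hBdD : Bd ⊆ Dᶜ := by
    rintro j ⟨hjZ, -⟩ hjD
    exact hjZ (hDZ hjD)
  have hcard : B.ncard ≤ Bd.ncard := hmin Bd hBdD hBdblock
  have hBeq : B = Bd := (Set.eq_of_subset_of_ncard_le hBdB hcard (Set.toFinite B)).symm
  refine ⟨hBeq, ?_, ?_⟩
  · rw [hBeq]
    ext x
    simp only [Set.mem_inter_iff, Set.mem_empty_iff_false, iff_false, not_and]
    rintro ⟨hxZ, -⟩ h
    exact hxZ h
  · intro b hb
    by_contra hc
    push_neg at hc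
    have hblock' : BlocksPaths E D T (B \ {b}) := by
      intro k p hp hp0 hlast
      obtain ⟨s, hs⟩ := hblock k p hp hp0 hlast
      refine ⟨s, hs, ?_⟩
      intro h
      have := hc k p hp hp0 hlast s
      simp only [Set.mem_singleton_iff] at h
      exact this h
    have hle := hmin (B \ {b}) (fun x hx => hBD hx.1) hblock'
    have hlt : (B \ {b}).ncard < B.ncard :=
      Set.ncard_diff_singleton_lt_of_mem hb (Set.toFinite B)
    omega
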